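/- Let D be a digraph on vertex set V and let H be the digraph obtained from D by reversing all arcs. For every X ⊆ V, pushing all vertices of X in D yields Inv(D;𝒳) if |X| is even and Inv(H;𝒳) if |X| is odd, where 𝒳 = {V \ {x} : x ∈ X}. Consequently, D can be made strongly connected by pushing a set of vertices if and only if D can be made strongly connected by a sequence of inversions of sets of size exactly n−1, where n = |V|. -/

import Mathlib

/-- Pushing the vertex `w` in `D`: every arc incident to `w` is reversed. -/
def push {V : Type*} [DecidableEq V] (D : V → V → Prop) (w : V) : V → V → Prop :=
  fun u v => if u = w ∨ v = w then D v u else D u v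

/-- Pushing the vertices of a list, one after another. -/
def pushSeq {V : Type*} [DecidableEq V] (D : V → V → Prop) (l : List V) : V → V → Prop :=
  l.foldl push D

/-- Inverting the vertex set `X` in `D`: all arcs with both endvertices in `X` are reversed. -/
def invert {V : Type*} [DecidableEq V] (D : V → V → Prop) (X : Finset V) : V → V → Prop :=
  fun u v => if u ∈ X ∧ v ∈ X then D v u else D u v

/-- Applying a sequence of inversions. -/
def invertSeq {V : Type*} [DecidableEq V] (D : V → V → Prop) (l : List (Finset V)) :
    V → V → Prop :=
  l.foldl invert D

/-- A digraph is strongly connected iff every nonempty proper vertex set has an outgoing arc. -/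
def StrongConn {V : Type*} [Fintype V] (D : V → V → Prop) : Prop :=
  ∀ S : Finset V, S.Nonempty → S ≠ Finset.univ → ∃ u ∈ S, ∃ v, v ∉ S ∧ D u v

section Aux
variable {V : Type*} [DecidableEq V]

def rev (D : V → V → Prop) : V → V → Prop := fun a b => D b a

lemma push_rev_eq (D : V → V → Prop) (w : V) : push (rev D) w = rev (push D w) := by
  funext u v
  simp only [push, rev]
  by_cases h1 : u = w <;> by_cases h2 : v = w <;> simp [h1, h2]

lemma invert_erase [Fintype V] (D : V → V → Prop) (w : V) :
    invert D (Finset.univ.erase w) = push (rev D) w := by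
  funext u v
  simp only [invert, push, rev, Finset.mem_erase, Finset.mem_univ, and_true]
  by_cases h1 : u = w <;> by_cases h2 : v = w <;> simp [h1, h2]

lemma key [Fintype V] (m : List V) : ∀ D : V → V → Prop,
    (Even m.length → invertSeq D (m.map fun x => Finset.univ.erase x) = pushSeq D m) ∧
    (Odd m.length → invertSeq D (m.map fun x => Finset.univ.erase x) = pushSeq (rev D) m) := by
  induction m with
  | nil =>
    intro D
    exact ⟨fun _ => rfl, fun h => absurd h (by simp)⟩
  | cons w m ih =>
    intro D
    have h0 : invertSeq D ((w :: m).map fun x => Finset.univ.erase x)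
        = invertSeq (push (rev D) w) (m.map fun x => Finset.univ.erase x) := by
      show invertSeq (invert D (Finset.univ.erase w)) _ = _
      rw [invert_erase]
    constructor
    · intro he
      have hm : Odd m.length := by
        rcases Nat.even_or_odd m.length with h | h
        · exfalso
          have : Odd (w :: m).length := by simp [List.length_cons, Nat.even_add_one, h, ← Nat.not_even_iff_odd]
          exact (Nat.not_odd_iff_even.mpr he) this
        · exact h
      rw [h0, (ih _).2 hm, ← push_rev_eq (rev D) w]
      rfl
    · intro ho
      have hm : Even m.length := by
        rcases Nat.even_or_odd m.length with h | h
        · exact h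
        · exfalso
          have : Even (w :: m).length := by simp [List.length_cons, Nat.even_add_one, Nat.not_even_iff_odd.mpr h]
          exact (Nat.not_odd_iff_even.mpr this) ho
      rw [h0, (ih _).1 hm]
      rfl

lemma pushSeq_rev (m : List V) : ∀ D : V → V → Prop, pushSeq (rev D) m = rev (pushSeq D m) := by
  induction m with
  | nil => intro D; rfl
  | cons w m ih =>
    intro D
    show pushSeq (push (rev D) w) m = rev (pushSeq (push D w) m)
    rw [push_rev_eq, ih]

lemma strongConn_rev [Fintype V] {D : V → V → Prop} (h : StrongConn D) : StrongConn (rev D) := by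
  intro S hS hne
  have h1 : (Sᶜ : Finset V).Nonempty := by
    rw [Finset.nonempty_iff_ne_empty]
    intro hc
    exact hne (by rwa [Finset.compl_eq_empty_iff] at hc)
  have h2 : (Sᶜ : Finset V) ≠ Finset.univ := by
    intro hc
    rw [Finset.compl_eq_univ_iff] at hc
    exact (Finset.nonempty_iff_ne_empty.mp hS) hc
  obtain ⟨u, hu, v, hv, hD⟩ := h Sᶜ h1 h2
  refine ⟨v, ?_, u, ?_, hD⟩
  · by_contra hvS
    exact hv (Finset.mem_compl.mpr hvS)
  · exact fun huS => (Finset.mem_compl.mp hu) huS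

end Aux

section Aux2
variable {V : Type*} [DecidableEq V]

lemma pushChar (m : List V) : ∀ (D : V → V → Prop) (u v : V), pushSeq D m u v ↔
    (if Odd (m.countP fun w => decide (u = w ∨ v = w)) then D v u else D u v) := by
  induction m with
  | nil => intro D u v; simp [pushSeq]
  | cons w m ih =>
    intro D u v
    rw [show pushSeq D (w :: m) = pushSeq (push D w) m from rfl, ih, List.countP_cons]
    by_cases hw : u = w ∨ v = w
    · rw [if_pos (decide_eq_true hw)]
      have hsw : v = w ∨ u = w := hw.symm
      by_cases ho : Odd (m.countP fun w => decide (u = w ∨ v = w))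
      · rw [if_pos ho, if_neg (by rw [Nat.odd_iff] at ho ⊢; omega)]
        simp [push, hsw]
      · rw [if_neg ho, if_pos (by rw [Nat.odd_iff] at ho ⊢; omega)]
        simp [push, hw]
    · rw [if_neg (show ¬((decide (u = w ∨ v = w)) = true) from by simp [hw]), add_zero]
      have h1 : ¬ (v = w ∨ u = w) := fun h => hw h.symm
      by_cases ho : Odd (m.countP fun w => decide (u = w ∨ v = w)) <;>
        simp [ho, push, hw, h1]

lemma countP_eq_same (m : List V) (u : V) :
    (m.countP fun w => decide (u = w ∨ u = w)) = m.count u := by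
  induction m with
  | nil => rfl
  | cons a m ih =>
    rw [List.countP_cons, List.count_cons, ih]
    by_cases h : u = a
    · subst h; simp
    · have h' : ¬ a = u := fun hh => h hh.symm
      simp [h, h']

lemma countP_eq_ne (m : List V) {u v : V} (huv : u ≠ v) :
    (m.countP fun w => decide (u = w ∨ v = w)) = m.count u + m.count v := by
  induction m with
  | nil => rfl
  | cons a m ih =>
    rw [List.countP_cons, List.count_cons, List.count_cons, ih]
    by_cases h1 : u = a <;> by_cases h2 : v = a
    · exact absurd (h1.trans h2.symm) huv
    · have h2' : ¬ a = v := fun hh => h2 hh.symm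
      simp [h1, h2']
      omega
    · have h1' : ¬ a = u := fun hh => h1 hh.symm
      simp [h2, h1']
      omega
    · have h1' : ¬ a = u := fun hh => h1 hh.symm
      have h2' : ¬ a = v := fun hh => h2 hh.symm
      simp [h1, h2, h1', h2']

end Aux2

section Aux3
variable {V : Type*} [Fintype V] [DecidableEq V]

lemma strongConn_congr {D E : V → V → Prop} (h : ∀ u v, D u v ↔ E u v)
    (hD : StrongConn D) : StrongConn E := by
  intro S hS hne
  obtain ⟨u, hu, v, hv, hD'⟩ := hD S hS hne
  exact ⟨u, hu, v, hv, (h u v).mp hD'⟩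

lemma exists_finset_pushSeq (D : V → V → Prop) (m : List V) :
    ∃ X : Finset V, ∀ u v, pushSeq D X.toList u v ↔ pushSeq D m u v := by
  refine ⟨Finset.univ.filter (fun x => m.count x % 2 = 1), fun u v => ?_⟩
  set X := Finset.univ.filter (fun x => m.count x % 2 = 1) with hX
  have hcount : ∀ x : V, X.toList.count x = m.count x % 2 := by
    intro x
    by_cases hx : x ∈ X
    · rw [List.count_eq_one_of_mem X.nodup_toList (Finset.mem_toList.mpr hx)]
      exact ((Finset.mem_filter.mp hx).2).symm
    · rw [List.count_eq_zero.mpr (fun hh => hx (Finset.mem_toList.mp hh))]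
      have : ¬ (m.count x % 2 = 1) := fun hh => hx (Finset.mem_filter.mpr ⟨Finset.mem_univ x, hh⟩)
      omega
  rw [pushChar, pushChar]
  by_cases huv : u = v
  · subst huv
    rw [countP_eq_same, countP_eq_same, hcount]
    have hiff : Odd (m.count u % 2) ↔ Odd (m.count u) := by
      rw [Nat.odd_iff, Nat.odd_iff]; omega
    simp only [hiff]
  · rw [countP_eq_ne _ huv, countP_eq_ne _ huv, hcount, hcount]
    have hiff : Odd (m.count u % 2 + m.count v % 2) ↔ Odd (m.count u + m.count v) := by
      rw [Nat.odd_iff, Nat.odd_iff]; omega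
    simp only [hiff]

lemma exists_vertex_list [Nonempty V] (l : List (Finset V))
    (h : ∀ Z ∈ l, Z.card = Fintype.card V - 1) :
    ∃ m : List V, l = m.map (fun x => Finset.univ.erase x) := by
  induction l with
  | nil => exact ⟨[], rfl⟩
  | cons Z l ih =>
    obtain ⟨m, hm⟩ := ih (fun W hW => h W (List.mem_cons_of_mem _ hW))
    have hZ : Z.card = Fintype.card V - 1 := h Z List.mem_cons_self
    have hcard : (Finset.univ \ Z).card = 1 := by
      rw [Finset.card_sdiff_of_subset (Finset.subset_univ Z), Finset.card_univ, hZ]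
      have : 1 ≤ Fintype.card V := Fintype.card_pos
      omega
    obtain ⟨x, hx⟩ := Finset.card_eq_one.mp hcard
    refine ⟨x :: m, ?_⟩
    rw [List.map_cons, ← hm]
    congr 1
    rw [Finset.erase_eq, ← hx, sdiff_sdiff_eq_self (Finset.subset_univ Z)]

end Aux3

/-- Let `H` be obtained from `D` by reversing all arcs.  Pushing a set `X` of vertices in `D`
yields `Inv(D;𝒳)` if `|X|` is even and `Inv(H;𝒳)` if `|X|` is odd, where
`𝒳 = {V \ {x} : x ∈ X}`.  Consequently, `D` can be made strongly connected by pushing a set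
of vertices iff it can be made strongly connected by a sequence of inversions of sets of size
exactly `n - 1`. -/
theorem stmt_15 {V : Type*} [Fintype V] [DecidableEq V] (D : V → V → Prop) :
    (∀ X : Finset V,
      (Even X.card → ∀ u v, pushSeq D X.toList u v ↔
          invertSeq D (X.toList.map (fun x => Finset.univ.erase x)) u v) ∧
      (Odd X.card → ∀ u v, pushSeq D X.toList u v ↔
          invertSeq (fun a b => D b a) (X.toList.map (fun x => Finset.univ.erase x)) u v)) ∧
    ((∃ X : Finset V, StrongConn (pushSeq D X.toList)) ↔
      ∃ l : List (Finset V), (∀ Z ∈ l, Z.card = Fintype.card V - 1) ∧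
        StrongConn (invertSeq D l)) := by
  constructor
  · intro X
    constructor
    · intro he u v
      have hlen : Even X.toList.length := by rwa [Finset.length_toList]
      rw [(key X.toList D).1 hlen]
    · intro ho u v
      have hlen : Odd X.toList.length := by rwa [Finset.length_toList]
      rw [(key X.toList (fun a b => D b a)).2 hlen]
      exact Iff.rfl
  constructor
  · rintro ⟨X, hX⟩
    refine ⟨X.toList.map (fun x => Finset.univ.erase x), ?_, ?_⟩
    · intro Z hZ
      obtain ⟨x, _, hx⟩ := List.mem_map.mp hZ
      rw [← hx, Finset.card_erase_of_mem (Finset.mem_univ x), Finset.card_univ]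
    · rcases Nat.even_or_odd X.toList.length with h | h
      · rw [(key X.toList D).1 h]; exact hX
      · rw [(key X.toList D).2 h, pushSeq_rev]
        exact strongConn_rev hX
  · rintro ⟨l, hl, hconn⟩
    rcases isEmpty_or_nonempty V with hV | hV
    · refine ⟨∅, ?_⟩
      intro S hS _
      obtain ⟨s, _⟩ := hS
      exact (hV.false s).elim
    · obtain ⟨m, hm⟩ := exists_vertex_list l hl
      subst hm
      have hDs : StrongConn (pushSeq D m) := by
        rcases Nat.even_or_odd m.length with h | h
        · rwa [(key m D).1 h] at hconn
        · rw [(key m D).2 h, pushSeq_rev] at hconn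
          exact strongConn_rev hconn
      obtain ⟨X, hX⟩ := exists_finset_pushSeq D m
      exact ⟨X, strongConn_congr (fun u v => (hX u v).symm) hDs⟩
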